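/- arXiv:2011.01111 — 5 statements merged into one kernel-verified Lean document; each statement's English description precedes it below -/
import Mathlib

section
/- Let D₁,…,D_m ∈ ℝ^{q×q}, and let X ∈ ℝ^{q×q} satisfy D_iX = Xᵀ D_i for all i. If γ ∈ ℂ is an eigenvalue of X with eigenvector z ∈ ℂ^q, then (γ − γ̄)·(zᴴ D_i z) = 0 for every i. Consequently, if min_{‖z‖=1} Σ_i |zᴴ D_i z|² > 0, then all eigenvalues of X are real. -/
open Matrix

theorem stmt3 {m q : ℕ} (D : Fin m → Matrix (Fin q) (Fin q) ℝ)
    (X : Matrix (Fin q) (Fin q) ℝ)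
    (hX : ∀ i, D i * X = Xᵀ * D i)
    (γ : ℂ) (z : Fin q → ℂ) (hz : z ≠ 0)
    (heig : (X.map Complex.ofReal) *ᵥ z = γ • z) :
    (∀ i, (γ - (starRingEnd ℂ) γ) * (star z ⬝ᵥ ((D i).map Complex.ofReal *ᵥ z)) = 0) ∧
    ((∀ w : Fin q → ℂ, star w ⬝ᵥ w = 1 →
        0 < ∑ i, ‖star w ⬝ᵥ ((D i).map Complex.ofReal *ᵥ w)‖ ^ 2) →
      γ.im = 0) := by
  have hstar : (X.map Complex.ofReal) *ᵥ star z = star ((X.map Complex.ofReal) *ᵥ z) := by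
    funext j
    simp only [mulVec, dotProduct, Pi.star_apply, Matrix.map_apply]
    rw [show (star : ℂ → ℂ) = starRingEnd ℂ from rfl, map_sum]
    congr 1; funext k
    simp [Complex.conj_ofReal]
  have hmap : ∀ A B : Matrix (Fin q) (Fin q) ℝ,
      (A * B).map Complex.ofReal = A.map Complex.ofReal * B.map Complex.ofReal := by
    intro A B
    ext j k
    simp [Matrix.mul_apply]
  have key : ∀ i, (γ - (starRingEnd ℂ) γ) * (star z ⬝ᵥ ((D i).map Complex.ofReal *ᵥ z)) = 0 := by
    intro i
    have h1 : star z ⬝ᵥ (((D i * X).map Complex.ofReal) *ᵥ z)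
        = γ * (star z ⬝ᵥ ((D i).map Complex.ofReal *ᵥ z)) := by
      rw [hmap, ← mulVec_mulVec, heig, mulVec_smul, dotProduct_smul]
      rfl
    have h2 : star z ⬝ᵥ (((Xᵀ * D i).map Complex.ofReal) *ᵥ z)
        = (starRingEnd ℂ) γ * (star z ⬝ᵥ ((D i).map Complex.ofReal *ᵥ z)) := by
      rw [hmap, ← mulVec_mulVec, dotProduct_mulVec,
        show (Xᵀ.map Complex.ofReal) = (X.map Complex.ofReal)ᵀ from rfl,
        vecMul_transpose, hstar, heig]
      rw [star_smul, smul_dotProduct]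
      rfl
    rw [hX i] at h1
    rw [h1] at h2
    linear_combination h2
  refine ⟨key, ?_⟩
  intro hmin
  -- normalize z
  set s : ℝ := ∑ k, Complex.normSq (z k) with hs
  have hc : star z ⬝ᵥ z = (s : ℂ) := by
    simp [dotProduct, hs, Complex.normSq_eq_conj_mul_self]
  have hspos : 0 < s := by
    rcases Function.ne_iff.mp hz with ⟨k, hk⟩
    have : 0 < Complex.normSq (z k) := Complex.normSq_pos.mpr hk
    exact Finset.sum_pos' (fun k _ => Complex.normSq_nonneg _) ⟨k, Finset.mem_univ k, this⟩
  set t : ℝ := Real.sqrt s with ht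
  have htpos : 0 < t := Real.sqrt_pos.mpr hspos
  set w : Fin q → ℂ := ((t⁻¹ : ℝ) : ℂ) • z with hw
  have hw1 : star w ⬝ᵥ w = 1 := by
    rw [hw, star_smul, smul_dotProduct, dotProduct_smul, hc]
    simp only [Complex.star_def, Complex.conj_ofReal, smul_eq_mul]
    norm_cast
    rw [← mul_assoc, ← mul_inv]
    rw [show t * t = s from by rw [ht]; exact Real.mul_self_sqrt hspos.le]
    field_simp
  have hpos := hmin w hw1
  obtain ⟨i, -, hi⟩ := Finset.exists_lt_of_sum_lt (by simpa using hpos :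
    ∑ _i : Fin m, (0:ℝ) < ∑ i, ‖star w ⬝ᵥ ((D i).map Complex.ofReal *ᵥ w)‖ ^ 2)
  have hne : star w ⬝ᵥ ((D i).map Complex.ofReal *ᵥ w) ≠ 0 := by
    intro h0
    rw [h0] at hi
    simp at hi
  have hscale : star w ⬝ᵥ ((D i).map Complex.ofReal *ᵥ w)
      = ((t⁻¹ : ℝ) : ℂ) * ((t⁻¹ : ℝ) : ℂ) * (star z ⬝ᵥ ((D i).map Complex.ofReal *ᵥ z)) := by
    rw [hw, star_smul, smul_dotProduct, mulVec_smul, dotProduct_smul]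
    simp only [Complex.star_def, Complex.conj_ofReal, smul_eq_mul]
    ring
  have hzne : star z ⬝ᵥ ((D i).map Complex.ofReal *ᵥ z) ≠ 0 := by
    intro h0
    apply hne
    rw [hscale, h0, mul_zero]
  have := key i
  have hγ : γ - (starRingEnd ℂ) γ = 0 := by
    rcases mul_eq_zero.mp this with h | h
    · exact h
    · exact absurd h hzne
  have := Complex.conj_eq_iff_im.mp (by linear_combination -hγ : (starRingEnd ℂ) γ = γ)
  exact this
end

section
/- Let t₁, t₂, t₃ be the roots (with multiplicity, each root of multiplicity at most two) of t³ + p t + q = 0 with p, q real. Then for every ε, each root t̃ of the perturbed equation t³ + (p+ε)t + q = 0 satisfies min_i |t̃ − t_i| = O(√|ε|) as ε → 0. More precisely, there exists a constant K (depending on p, q) such that for small |ε|, min_i |t̃ − t_i| ≤ K√|ε|. -/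
/-- If `a*b*c ≤ M`, `a ≥ δ/2 > 0`, then `b ≤ √(2M/δ)` or `c ≤ √(2M/δ)`. -/
lemma aux_min_sqrt (a b c δ M : ℝ) (hb : 0 ≤ b) (hc : 0 ≤ c)
    (hδ : 0 < δ) (ha : δ / 2 ≤ a) (h : a * b * c ≤ M) :
    b ≤ Real.sqrt (2 * M / δ) ∨ c ≤ Real.sqrt (2 * M / δ) := by
  have ha0 : 0 < a := lt_of_lt_of_le (by linarith) ha
  have hbc : b * c ≤ 2 * M / δ := by
    rw [le_div_iff₀ hδ]
    nlinarith [mul_nonneg hb hc, mul_le_mul_of_nonneg_right ha (mul_nonneg hb hc)]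
  rcases le_total b c with hle | hle
  · left
    have : b ^ 2 ≤ 2 * M / δ := by nlinarith
    calc b = Real.sqrt (b ^ 2) := by rw [Real.sqrt_sq hb]
    _ ≤ Real.sqrt (2 * M / δ) := Real.sqrt_le_sqrt this
  · right
    have : c ^ 2 ≤ 2 * M / δ := by nlinarith
    calc c = Real.sqrt (c ^ 2) := by rw [Real.sqrt_sq hc]
    _ ≤ Real.sqrt (2 * M / δ) := Real.sqrt_le_sqrt this

theorem stmt12 (p q : ℝ) (t₁ t₂ t₃ : ℂ)
    (hfact : ∀ t : ℂ, t ^ 3 + (p : ℂ) * t + (q : ℂ) = (t - t₁) * (t - t₂) * (t - t₃))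
    (hmult : ¬(t₁ = t₂ ∧ t₁ = t₃)) :
    ∃ K > (0 : ℝ), ∃ ε₀ > (0 : ℝ), ∀ ε : ℝ, |ε| < ε₀ →
      ∀ tt : ℂ, tt ^ 3 + ((p : ℂ) + (ε : ℂ)) * tt + (q : ℂ) = 0 →
        ‖tt - t₁‖ ≤ K * Real.sqrt |ε| ∨
        ‖tt - t₂‖ ≤ K * Real.sqrt |ε| ∨
        ‖tt - t₃‖ ≤ K * Real.sqrt |ε| := by
  set δ := max (‖t₁ - t₂‖) (‖t₁ - t₃‖) with hδdef
  have hδ : 0 < δ := by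
    rcases not_and_or.mp hmult with h | h
    · exact lt_max_of_lt_left (by simpa [sub_eq_zero] using (norm_pos_iff.mpr (sub_ne_zero.mpr h)))
    · exact lt_max_of_lt_right (by simpa [sub_eq_zero] using (norm_pos_iff.mpr (sub_ne_zero.mpr h)))
  set B : ℝ := |p| + |q| + 2 with hBdef
  have hB2 : 2 ≤ B := by have := abs_nonneg p; have := abs_nonneg q; simp only [hBdef]; linarith
  have hB0 : 0 < B := by linarith
  refine ⟨Real.sqrt (2 * B / δ), Real.sqrt_pos.mpr (by positivity), 1, one_pos, ?_⟩
  intro ε hε tt htt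
  -- bound on |tt|
  have httB : ‖tt‖ ≤ B := by
    by_contra hcon
    push_neg at hcon
    have h3 : tt ^ 3 = -(((p : ℂ) + (ε : ℂ)) * tt) - q := by linear_combination htt
    have := congrArg norm h3
    rw [norm_pow] at this
    set x := ‖tt‖ with hx
    have hxb : x ^ 3 ≤ (|p| + 1) * x + |q| := by
      rw [this]
      have hco : ‖(p : ℂ) + (ε : ℂ)‖ ≤ |p| + 1 := by
        calc ‖(p : ℂ) + (ε : ℂ)‖ ≤ ‖(p:ℂ)‖ + ‖(ε:ℂ)‖ :=
            norm_add_le _ _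
          _ ≤ |p| + 1 := by rw [Complex.norm_real, Complex.norm_real, Real.norm_eq_abs, Real.norm_eq_abs]; linarith
      calc ‖-(((p : ℂ) + (ε : ℂ)) * tt) - q‖
          ≤ ‖-(((p : ℂ) + (ε : ℂ)) * tt)‖ + ‖-(q : ℂ)‖ := by
            simpa [sub_eq_add_neg] using norm_add_le (-(((p : ℂ) + (ε : ℂ)) * tt)) (-(q:ℂ))
        _ ≤ (|p| + 1) * x + |q| := by
            rw [norm_neg, norm_mul, norm_neg, Complex.norm_real, Real.norm_eq_abs]
            have := mul_le_mul_of_nonneg_right hco (norm_nonneg tt)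
            rw [hx]
            linarith
    have hp : 0 ≤ |p| := abs_nonneg p
    have hq : 0 ≤ |q| := abs_nonneg q
    nlinarith [sq_nonneg x, sq_nonneg (x - 1)]
  -- the product identity
  have hprod : ‖tt - t₁‖ * ‖tt - t₂‖ * ‖tt - t₃‖
      = |ε| * ‖tt‖ := by
    have : (tt - t₁) * (tt - t₂) * (tt - t₃) = -(ε : ℂ) * tt := by
      rw [← hfact tt]; linear_combination htt
    have := congrArg norm this
    simpa [norm_mul, Complex.norm_real, Real.norm_eq_abs] using this
  have hprodM : ‖tt - t₁‖ * ‖tt - t₂‖ * ‖tt - t₃‖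
      ≤ |ε| * B := by
    rw [hprod]; exact mul_le_mul_of_nonneg_left httB (abs_nonneg ε)
  have hsqrt : Real.sqrt (2 * (|ε| * B) / δ) = Real.sqrt (2 * B / δ) * Real.sqrt |ε| := by
    rw [← Real.sqrt_mul (by positivity)]
    congr 1
    field_simp
  set M := |ε| * B with hM
  have key : ∀ u v w : ℂ, ‖u - v‖ ≤ δ / 2 → δ ≤ ‖v - w‖ →
      δ / 2 ≤ ‖u - w‖ := by
    intro u v w h1 h2
    have ht : ‖v - w‖ ≤ ‖v - u‖ + ‖u - w‖ := by
      simpa using norm_add_le (v - u) (u - w)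
    have h1' : ‖v - u‖ ≤ δ / 2 := by
      rw [norm_sub_rev]; exact h1
    linarith
  -- case analysis on which pair is separated
  rcases max_cases (‖t₁ - t₂‖) (‖t₁ - t₃‖) with ⟨heq, _⟩ | ⟨heq, _⟩
  · -- δ = |t₁ - t₂|
    rcases le_or_gt (δ / 2) (‖tt - t₁‖) with h1 | h1
    · rcases aux_min_sqrt _ _ _ δ M (norm_nonneg _) (norm_nonneg _) hδ h1
        hprodM with h | h
      · right; left; rw [← hsqrt]; exact h
      · right; right; rw [← hsqrt]; exact h
    · have h2 : δ / 2 ≤ ‖tt - t₂‖ := key tt t₁ t₂ h1.le (hδdef.trans heq).le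
      have hrw : ‖tt - t₂‖ * ‖tt - t₁‖ * ‖tt - t₃‖ ≤ M := by
        rw [show ‖tt - t₂‖ * ‖tt - t₁‖ * ‖tt - t₃‖
            = ‖tt - t₁‖ * ‖tt - t₂‖ * ‖tt - t₃‖ by ring]
        exact hprodM
      rcases aux_min_sqrt _ _ _ δ M (norm_nonneg _) (norm_nonneg _) hδ h2
        hrw with h | h
      · left; rw [← hsqrt]; exact h
      · right; right; rw [← hsqrt]; exact h
  · -- δ = |t₁ - t₃|
    rcases le_or_gt (δ / 2) (‖tt - t₁‖) with h1 | h1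
    · rcases aux_min_sqrt _ _ _ δ M (norm_nonneg _) (norm_nonneg _) hδ h1
        hprodM with h | h
      · right; left; rw [← hsqrt]; exact h
      · right; right; rw [← hsqrt]; exact h
    · have h2 : δ / 2 ≤ ‖tt - t₃‖ := key tt t₁ t₃ h1.le (hδdef.trans heq).le
      have hrw : ‖tt - t₃‖ * ‖tt - t₁‖ * ‖tt - t₂‖ ≤ M := by
        rw [show ‖tt - t₃‖ * ‖tt - t₁‖ * ‖tt - t₂‖
            = ‖tt - t₁‖ * ‖tt - t₂‖ * ‖tt - t₃‖ by ring]
        exact hprodM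
      rcases aux_min_sqrt _ _ _ δ M (norm_nonneg _) (norm_nonneg _) hδ h2
        hrw with h | h
      · left; rw [← hsqrt]; exact h
      · right; left; rw [← hsqrt]; exact h
end

section
/- Let Z ∈ ℝ^{q×q} be nonsingular and let X = Z^{-ᵀ} diag(√(q₂/q₁) I_{q₁}, −√(q₁/q₂) I_{q₂}) Zᵀ with q₁+q₂=q, q₁,q₂ ≥ 1. Then tr(X)=0, tr(X²)=q, and for any family {D_i} of q×q matrices admitting the factorization D_i = Z Φ_i Zᵀ with each Φ_i block diagonal conformally with (q₁,q₂), one has D_i X = Xᵀ D_i for all i. -/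
open Matrix

lemma trace_fromBlocks' {n₁ n₂ : Type*} [Fintype n₁] [Fintype n₂] [DecidableEq n₁]
    [DecidableEq n₂] (a : Matrix n₁ n₁ ℝ) (b : Matrix n₁ n₂ ℝ) (c : Matrix n₂ n₁ ℝ)
    (d : Matrix n₂ n₂ ℝ) :
    (Matrix.fromBlocks a b c d).trace = a.trace + d.trace := by
  simp [Matrix.trace, Matrix.diag, Fintype.sum_sum_type]

theorem stmt15 {m q₁ q₂ : ℕ} (hq₁ : 0 < q₁) (hq₂ : 0 < q₂)
    (Z : Matrix (Fin q₁ ⊕ Fin q₂) (Fin q₁ ⊕ Fin q₂) ℝ) (hZ : IsUnit Z.det)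
    (X : Matrix (Fin q₁ ⊕ Fin q₂) (Fin q₁ ⊕ Fin q₂) ℝ)
    (hX : X = (Z⁻¹)ᵀ *
        Matrix.fromBlocks (Real.sqrt ((q₂ : ℝ) / (q₁ : ℝ)) • (1 : Matrix (Fin q₁) (Fin q₁) ℝ)) 0 0
          (-(Real.sqrt ((q₁ : ℝ) / (q₂ : ℝ))) • (1 : Matrix (Fin q₂) (Fin q₂) ℝ)) * Zᵀ)
    (D : Fin m → Matrix (Fin q₁ ⊕ Fin q₂) (Fin q₁ ⊕ Fin q₂) ℝ)
    (Φa : Fin m → Matrix (Fin q₁) (Fin q₁) ℝ) (Φb : Fin m → Matrix (Fin q₂) (Fin q₂) ℝ)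
    (hD : ∀ i, D i = Z * Matrix.fromBlocks (Φa i) 0 0 (Φb i) * Zᵀ) :
    X.trace = 0 ∧ (X * X).trace = ((q₁ : ℝ) + (q₂ : ℝ)) ∧
    ∀ i, D i * X = Xᵀ * D i := by
  set s : ℝ := Real.sqrt ((q₂ : ℝ) / (q₁ : ℝ)) with hs
  set t : ℝ := Real.sqrt ((q₁ : ℝ) / (q₂ : ℝ)) with ht
  set A : Matrix (Fin q₁ ⊕ Fin q₂) (Fin q₁ ⊕ Fin q₂) ℝ :=
    Matrix.fromBlocks (s • (1 : Matrix (Fin q₁) (Fin q₁) ℝ)) 0 0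
      (-t • (1 : Matrix (Fin q₂) (Fin q₂) ℝ)) with hA
  have hq₁' : (0:ℝ) < q₁ := by exact_mod_cast hq₁
  have hq₂' : (0:ℝ) < q₂ := by exact_mod_cast hq₂
  have hs2 : s ^ 2 = (q₂ : ℝ) / q₁ := Real.sq_sqrt (by positivity)
  have ht2 : t ^ 2 = (q₁ : ℝ) / q₂ := Real.sq_sqrt (by positivity)
  have hst : s * t = 1 := by
    rw [hs, ht, ← Real.sqrt_mul (by positivity)]
    rw [div_mul_div_comm, mul_comm, div_self (by positivity), Real.sqrt_one]
  have hZT : IsUnit Zᵀ.det := by rwa [Matrix.det_transpose]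
  have hZinv : Zᵀ * (Z⁻¹)ᵀ = 1 := by
    rw [Matrix.transpose_nonsing_inv, Matrix.mul_nonsing_inv _ hZT]
  have hZinv' : (Z⁻¹)ᵀ * Zᵀ = 1 := by
    rw [Matrix.transpose_nonsing_inv, Matrix.nonsing_inv_mul _ hZT]
  have hcard₁ : (Fintype.card (Fin q₁) : ℝ) = q₁ := by simp
  have hcard₂ : (Fintype.card (Fin q₂) : ℝ) = q₂ := by simp
  refine ⟨?_, ?_, ?_⟩
  · have : X.trace = A.trace := by
      rw [hX, Matrix.trace_mul_cycle, hZinv, Matrix.one_mul]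
    rw [this, hA, trace_fromBlocks', Matrix.trace_smul, Matrix.trace_smul,
      Matrix.trace_one, Matrix.trace_one]
    simp only [smul_eq_mul, hcard₁, hcard₂]
    have h1 : (q₁ : ℝ) * s = Real.sqrt ((q₁ : ℝ) * q₂) := by
      rw [hs, show ((q₁:ℝ)*q₂) = (q₁:ℝ)^2 * ((q₂:ℝ)/q₁) by field_simp,
        Real.sqrt_mul (by positivity), Real.sqrt_sq hq₁'.le]
    have h2 : (q₂ : ℝ) * t = Real.sqrt ((q₁ : ℝ) * q₂) := by
      rw [ht, show ((q₁:ℝ)*q₂) = (q₂:ℝ)^2 * ((q₁:ℝ)/q₂) by field_simp,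
        Real.sqrt_mul (by positivity), Real.sqrt_sq hq₂'.le]
    nlinarith [h1, h2]
  · have hXX : X * X = (Z⁻¹)ᵀ * (A * A) * Zᵀ := by
      rw [hX]
      calc (Z⁻¹)ᵀ * A * Zᵀ * ((Z⁻¹)ᵀ * A * Zᵀ)
          = (Z⁻¹)ᵀ * A * (Zᵀ * (Z⁻¹)ᵀ) * A * Zᵀ := by noncomm_ring
        _ = (Z⁻¹)ᵀ * (A * A) * Zᵀ := by rw [hZinv]; noncomm_ring
    rw [hXX, Matrix.trace_mul_cycle, hZinv, Matrix.one_mul, hA,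
      Matrix.fromBlocks_multiply, trace_fromBlocks']
    simp only [Matrix.mul_zero, Matrix.zero_mul, add_zero, zero_add, smul_mul_smul_comm,
      Matrix.mul_one, Matrix.trace_smul, Matrix.trace_one,
      smul_eq_mul, hcard₁, hcard₂]
    have : s * s = (q₂ : ℝ) / q₁ := by rw [← sq]; exact hs2
    have h2 : t * t = (q₁ : ℝ) / q₂ := by rw [← sq]; exact ht2
    rw [this, neg_mul_neg, h2]
    field_simp
    ring
  · intro i
    have hcomm : Matrix.fromBlocks (Φa i) 0 0 (Φb i) * A
        = A * Matrix.fromBlocks (Φa i) 0 0 (Φb i) := by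
      rw [hA, Matrix.fromBlocks_multiply, Matrix.fromBlocks_multiply]
      simp [Matrix.mul_smul, Matrix.smul_mul]
    have hAT : Aᵀ = A := by
      rw [hA, Matrix.fromBlocks_transpose]
      simp
    rw [hD, hX, Matrix.transpose_mul, Matrix.transpose_mul, Matrix.transpose_transpose,
      Matrix.transpose_transpose, hAT]
    calc Z * Matrix.fromBlocks (Φa i) 0 0 (Φb i) * Zᵀ * ((Z⁻¹)ᵀ * A * Zᵀ)
        = Z * (Matrix.fromBlocks (Φa i) 0 0 (Φb i) * (Zᵀ * (Z⁻¹)ᵀ) * A) * Zᵀ := by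
          noncomm_ring
      _ = Z * (Matrix.fromBlocks (Φa i) 0 0 (Φb i) * A) * Zᵀ := by
          rw [hZinv, Matrix.mul_one]
      _ = Z * (A * Matrix.fromBlocks (Φa i) 0 0 (Φb i)) * Zᵀ := by rw [hcomm]
      _ = Z * A * ((Z⁻¹ * Z) * Matrix.fromBlocks (Φa i) 0 0 (Φb i)) * Zᵀ := by
          rw [Matrix.nonsing_inv_mul _ hZ, Matrix.one_mul]
          noncomm_ring
      _ = Z * (A * Z⁻¹) * (Z * Matrix.fromBlocks (Φa i) 0 0 (Φb i) * Zᵀ) := by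
          noncomm_ring
end

section
/- Let B₁,…,B_m ∈ ℝ^{p×p} admit B_i = Z Σ_i Zᵀ = Ẑ Σ̂_i Ẑᵀ where Z, Ẑ are nonsingular, Σ_i are τ_p-block diagonal and Σ̂_i are τ̂_p-block diagonal. Set Y = ZᵀẐ^{-ᵀ} and Γ = Y diag(γ₁I_{p̂₁},…,γ_ℓ̂I_{p̂_ℓ̂}) Y^{-1} for distinct reals γ_j. Then Σ_iΓ = ΓᵀΣ_i for every i = 1,…,m. -/
open Matrix

theorem stmt17 {m ℓh ℓ₀ : ℕ} (pv : Fin ℓh → ℕ)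
    (B Sig Sigh : Fin m → Matrix ((j : Fin ℓh) × Fin (pv j)) ((j : Fin ℓh) × Fin (pv j)) ℝ)
    (Z Zh : Matrix ((j : Fin ℓh) × Fin (pv j)) ((j : Fin ℓh) × Fin (pv j)) ℝ)
    (hZ : IsUnit Z.det) (hZh : IsUnit Zh.det)
    (bτ : ((j : Fin ℓh) × Fin (pv j)) → Fin ℓ₀)
    (hSigblk : ∀ i x y, bτ x ≠ bτ y → Sig i x y = 0)
    (hSighblk : ∀ i (x y : (j : Fin ℓh) × Fin (pv j)), x.1 ≠ y.1 → Sigh i x y = 0)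
    (hB1 : ∀ i, B i = Z * Sig i * Zᵀ) (hB2 : ∀ i, B i = Zh * Sigh i * Zhᵀ)
    (γ : Fin ℓh → ℝ) (hγ : Function.Injective γ)
    (Y Γ : Matrix ((j : Fin ℓh) × Fin (pv j)) ((j : Fin ℓh) × Fin (pv j)) ℝ)
    (hY : Y = Zᵀ * (Zh⁻¹)ᵀ)
    (hΓ : Γ = Y * Matrix.diagonal (fun x => γ x.1) * Y⁻¹) :
    ∀ i, Sig i * Γ = Γᵀ * Sig i := by
  intro i
  set D : Matrix ((j : Fin ℓh) × Fin (pv j)) ((j : Fin ℓh) × Fin (pv j)) ℝ :=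
    Matrix.diagonal (fun x => γ x.1) with hD
  have hZh' : IsUnit Zhᵀ.det := by rwa [det_transpose]
  have hYT : Yᵀ = Zh⁻¹ * Z := by
    rw [hY, transpose_mul, transpose_transpose, transpose_transpose]
  have hYv : Y = Zᵀ * (Zhᵀ)⁻¹ := by rw [hY, transpose_nonsing_inv]
  have hYdet : IsUnit Y.det := by
    rw [hY, det_mul, det_transpose, det_transpose, det_nonsing_inv]
    exact hZ.mul (isUnit_ringInverse.mpr hZh)
  have hYTdet : IsUnit Yᵀ.det := by rwa [det_transpose]
  -- Sigh i = Yᵀ * Sig i * Y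
  have hkey : Sigh i = Yᵀ * Sig i * Y := by
    have h : Z * Sig i * Zᵀ = Zh * Sigh i * Zhᵀ := (hB1 i).symm.trans (hB2 i)
    rw [hYT, hYv]
    calc Sigh i = (Zh⁻¹ * Zh) * Sigh i * (Zhᵀ * (Zhᵀ)⁻¹) := by
          rw [nonsing_inv_mul Zh hZh, mul_nonsing_inv Zhᵀ hZh', one_mul, mul_one]
      _ = Zh⁻¹ * (Zh * Sigh i * Zhᵀ) * (Zhᵀ)⁻¹ := by
          simp only [Matrix.mul_assoc]
      _ = Zh⁻¹ * (Z * Sig i * Zᵀ) * (Zhᵀ)⁻¹ := by rw [h]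
      _ = Zh⁻¹ * Z * Sig i * (Zᵀ * (Zhᵀ)⁻¹) := by simp only [Matrix.mul_assoc]
  -- D commutes with Sigh i
  have hDT : Dᵀ = D := diagonal_transpose _
  have hcomm : D * Sigh i = Sigh i * D := by
    ext x y
    by_cases h : x.1 = y.1
    · simp [hD, diagonal_mul, mul_diagonal, h, mul_comm]
    · simp [hD, diagonal_mul, mul_diagonal, hSighblk i x y h]
  have h1 : Sig i * Y = (Yᵀ)⁻¹ * Sigh i := by
    rw [hkey, ← Matrix.mul_assoc, ← Matrix.mul_assoc,
      nonsing_inv_mul Yᵀ hYTdet, one_mul]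
  have h2 : Sigh i * Y⁻¹ = Yᵀ * Sig i := by
    rw [hkey, Matrix.mul_assoc, mul_nonsing_inv Y hYdet, mul_one]
  have hΓT : Γᵀ = (Yᵀ)⁻¹ * D * Yᵀ := by
    rw [hΓ, transpose_mul, transpose_mul, hDT, transpose_nonsing_inv, ← Matrix.mul_assoc]
  calc Sig i * Γ = Sig i * Y * (D * Y⁻¹) := by rw [hΓ]; simp only [Matrix.mul_assoc]
    _ = (Yᵀ)⁻¹ * Sigh i * (D * Y⁻¹) := by rw [h1]
    _ = (Yᵀ)⁻¹ * (Sigh i * D) * Y⁻¹ := by simp only [Matrix.mul_assoc]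
    _ = (Yᵀ)⁻¹ * (D * Sigh i) * Y⁻¹ := by rw [hcomm]
    _ = (Yᵀ)⁻¹ * D * (Sigh i * Y⁻¹) := by simp only [Matrix.mul_assoc]
    _ = Γᵀ * Sig i := by rw [h2, hΓT]; simp only [Matrix.mul_assoc]
end

section
/- Let D₁,…,D_m ∈ ℝ^{q×q}, X ∈ ℝ^{q×q}, γ an eigenvalue of X with unit eigenvector z ∈ ℂ^q, and μ = min_{‖w‖=1} (Σ_i |wᴴD_iw|²)^{1/2} > 0. Then |Im(γ)| ≤ (Σ_{i=1}^m ‖D_iX − XᵀD_i‖_F²)^{1/2} / (2μ). -/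
open Matrix

/-- Frobenius norm of a real matrix. -/
noncomputable def frobNorm {a b : ℕ} (M : Matrix (Fin a) (Fin b) ℝ) : ℝ :=
  Real.sqrt (∑ i, ∑ j, (M i j) ^ 2)

lemma quad_le_frob {q : ℕ} (M : Matrix (Fin q) (Fin q) ℝ) (z : Fin q → ℂ)
    (hz1 : ∑ j, Complex.normSq (z j) = 1) :
    norm (star z ⬝ᵥ (M.map Complex.ofReal *ᵥ z)) ≤ frobNorm M := by
  have hexp : star z ⬝ᵥ (M.map Complex.ofReal *ᵥ z)
      = ∑ p : Fin q × Fin q, (M p.1 p.2 : ℂ) * ((starRingEnd ℂ) (z p.1) * z p.2) := by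
    rw [Fintype.sum_prod_type]
    simp only [dotProduct, Matrix.mulVec, Matrix.map_apply, Pi.star_apply,
      Finset.mul_sum, dotProduct, Complex.star_def]
    congr 1; ext j; congr 1; ext k; ring
  have h1 : norm (star z ⬝ᵥ (M.map Complex.ofReal *ᵥ z))
      ≤ ∑ p : Fin q × Fin q, |M p.1 p.2| * (norm (z p.1) * norm (z p.2)) := by
    rw [hexp]
    refine le_trans (norm_sum_le _ _) ?_
    apply Finset.sum_le_sum
    intro p _
    rw [norm_mul, norm_mul, Complex.norm_real, Real.norm_eq_abs, Complex.norm_conj]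
  have hcs := Finset.sum_mul_sq_le_sq_mul_sq Finset.univ
    (fun p : Fin q × Fin q => |M p.1 p.2|)
    (fun p : Fin q × Fin q => norm (z p.1) * norm (z p.2))
  have hg : ∑ p : Fin q × Fin q, (norm (z p.1) * norm (z p.2)) ^ 2 = 1 := by
    rw [Fintype.sum_prod_type]
    have : ∀ j k : Fin q, (norm (z j) * norm (z k)) ^ 2
        = Complex.normSq (z j) * Complex.normSq (z k) := by
      intro j k
      rw [mul_pow, Complex.sq_norm, Complex.sq_norm]
    simp only [this]
    rw [← Finset.sum_mul_sum]
    simp [hz1]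
  have hf : ∑ p : Fin q × Fin q, |M p.1 p.2| ^ 2 = ∑ i, ∑ j, (M i j) ^ 2 := by
    rw [Fintype.sum_prod_type]
    simp [sq_abs]
  rw [hg, mul_one, hf] at hcs
  refine le_trans h1 ?_
  rw [frobNorm]
  exact Real.le_sqrt_of_sq_le hcs

theorem stmt19 {m q : ℕ} (D : Fin m → Matrix (Fin q) (Fin q) ℝ)
    (X : Matrix (Fin q) (Fin q) ℝ) (γ : ℂ) (z : Fin q → ℂ)
    (hz : star z ⬝ᵥ z = 1)
    (heig : (X.map Complex.ofReal) *ᵥ z = γ • z)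
    (μ : ℝ) (hμ : 0 < μ)
    (hmin : ∀ w : Fin q → ℂ, star w ⬝ᵥ w = 1 →
      μ ≤ Real.sqrt (∑ i, ‖star w ⬝ᵥ ((D i).map Complex.ofReal *ᵥ w)‖ ^ 2)) :
    |γ.im| ≤ Real.sqrt (∑ i, frobNorm (D i * X - Xᵀ * D i) ^ 2) / (2 * μ) := by
  have hz1 : ∑ j, Complex.normSq (z j) = 1 := by
    have : ((∑ j, Complex.normSq (z j) : ℝ) : ℂ) = 1 := by
      rw [← hz]
      simp [dotProduct, Complex.normSq_eq_conj_mul_self]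
    exact_mod_cast this
  set d : Fin m → ℂ := fun i => star z ⬝ᵥ ((D i).map Complex.ofReal *ᵥ z) with hd
  -- step 1: the quadratic form of the commutator
  have key : ∀ i, star z ⬝ᵥ ((D i * X - Xᵀ * D i).map Complex.ofReal *ᵥ z)
      = (γ - (starRingEnd ℂ) γ) * d i := by
    intro i
    have hmapsub : (D i * X - Xᵀ * D i).map Complex.ofReal
        = (D i).map Complex.ofReal * X.map Complex.ofReal
          - (X.map Complex.ofReal)ᵀ * (D i).map Complex.ofReal := by
      ext j k
      simp [Matrix.map_apply, Matrix.sub_apply, Matrix.mul_apply, Matrix.transpose_apply]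
    have hstar : X.map Complex.ofReal *ᵥ star z = (starRingEnd ℂ) γ • star z := by
      have : X.map Complex.ofReal *ᵥ star z = star (X.map Complex.ofReal *ᵥ z) := by
        ext j
        simp [Matrix.mulVec, dotProduct, map_sum]
      rw [this, heig, star_smul]
      rfl
    rw [hmapsub, Matrix.sub_mulVec, dotProduct_sub, ← Matrix.mulVec_mulVec,
      ← Matrix.mulVec_mulVec, heig, Matrix.mulVec_smul, dotProduct_smul,
      Matrix.dotProduct_mulVec (star z) ((X.map Complex.ofReal)ᵀ),
      Matrix.vecMul_transpose, hstar, smul_dotProduct]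
    simp only [hd, smul_eq_mul]
    ring
  -- step 2: per-index bound
  have bound : ∀ i, 2 * |γ.im| * norm (d i) ≤ frobNorm (D i * X - Xᵀ * D i) := by
    intro i
    have h := quad_le_frob (D i * X - Xᵀ * D i) z hz1
    rw [key i, norm_mul] at h
    have habs : norm (γ - (starRingEnd ℂ) γ) = 2 * |γ.im| := by
      rw [Complex.sub_conj]
      rw [norm_mul, Complex.norm_I, mul_one, Complex.norm_real, Real.norm_eq_abs, abs_mul]
      norm_num
    rwa [habs] at h
  -- sum of squares
  have hsum : (2 * |γ.im|) ^ 2 * (∑ i, norm (d i) ^ 2)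
      ≤ ∑ i, frobNorm (D i * X - Xᵀ * D i) ^ 2 := by
    rw [Finset.mul_sum]
    apply Finset.sum_le_sum
    intro i _
    have h := bound i
    have h2 : (2 * |γ.im| * norm (d i)) ^ 2
        ≤ frobNorm (D i * X - Xᵀ * D i) ^ 2 :=
      pow_le_pow_left₀ (by positivity) h 2
    calc (2 * |γ.im|) ^ 2 * norm (d i) ^ 2
        = (2 * |γ.im| * norm (d i)) ^ 2 := by ring
      _ ≤ _ := h2
  have hμ2 : μ ^ 2 ≤ ∑ i, norm (d i) ^ 2 := by
    have h := hmin z hz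
    exact (Real.le_sqrt' hμ).mp h
  have hfinal : (2 * |γ.im| * μ) ^ 2 ≤ ∑ i, frobNorm (D i * X - Xᵀ * D i) ^ 2 := by
    calc (2 * |γ.im| * μ) ^ 2 = (2 * |γ.im|) ^ 2 * μ ^ 2 := by ring
      _ ≤ (2 * |γ.im|) ^ 2 * (∑ i, norm (d i) ^ 2) := by
          apply mul_le_mul_of_nonneg_left hμ2 (by positivity)
      _ ≤ _ := hsum
  have h2μ : (0:ℝ) < 2 * μ := by linarith
  rw [le_div_iff₀ h2μ]
  have hsq : 2 * |γ.im| * μ ≤ Real.sqrt (∑ i, frobNorm (D i * X - Xᵀ * D i) ^ 2) := by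
    have h1 : (0:ℝ) ≤ 2 * |γ.im| * μ := by positivity
    have h2 := Real.sqrt_le_sqrt hfinal
    rwa [Real.sqrt_sq h1] at h2
  linarith
end
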